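/- Proposition 1 (symmetry at a relabeling time): Let N be a relabeling time, W the cyclic word of length N over {a,b} recording gap sizes, and J the index with u_J = N-1. Then W_{J-1} ≠ W_J and W_{J-1-k} = W_{J+k} for all k = 1, ..., N-2. -/

import Mathlib

/-- The cyclic gap after the point `{m α}` among the points `{0α}, …, {(N-1)α}` on ℝ/ℤ:
the infimum of positive circular distances from `{m α}` to the other points. -/
noncomputable def gapAt (α : ℝ) (N : ℕ) (m : ℕ) : ℝ :=
  sInf {d : ℝ | 0 < d ∧ ∃ m' : ℕ, m' < N ∧ Int.fract ((m' : ℝ) * α - (m : ℝ) * α) = d}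

open Classical in
/-- The set of distinct cyclic gap lengths of the configuration `{0α}, …, {(N-1)α}`. -/
noncomputable def gapSet (α : ℝ) (N : ℕ) : Finset ℝ :=
  (Finset.range N).image (gapAt α N)

/-- The multiset of cyclic gaps of the configuration `{0α}, …, {(N-1)α}`. -/
noncomputable def gapMult (α : ℝ) (N : ℕ) : Multiset ℝ :=
  (Multiset.range N).map (gapAt α N)

/-- Cyclic extension of the ordering permutation `u` to integer indices, mod `N`. -/
def uc (N : ℕ) (u : ℕ → ℕ) (j : ℤ) : ℕ := u ((j % (N : ℤ)).toNat)


lemma fract_sub_fract (a b : ℝ) : Int.fract (a - b) = Int.fract (Int.fract a - Int.fract b) := by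
  have h1 : a - b = (Int.fract a - Int.fract b) + ((⌊a⌋ : ℝ) - ⌊b⌋) := by
    unfold Int.fract; ring
  rw [h1, show ((⌊a⌋:ℝ) - ⌊b⌋) = ((⌊a⌋ - ⌊b⌋ : ℤ) : ℝ) by push_cast; ring, Int.fract_add_intCast]

lemma fract_add_fract (a b : ℝ) : Int.fract (a + b) = Int.fract (Int.fract a + Int.fract b) := by
  have h1 : a + b = (Int.fract a + Int.fract b) + ((⌊a⌋ : ℝ) + ⌊b⌋) := by
    unfold Int.fract; ring
  rw [h1, show ((⌊a⌋:ℝ) + ⌊b⌋) = ((⌊a⌋ + ⌊b⌋ : ℤ) : ℝ) by push_cast; ring, Int.fract_add_intCast]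

lemma fract_int_mul_pos {α : ℝ} (hα : Irrational α) {d : ℤ} (hd : d ≠ 0) :
    0 < Int.fract ((d : ℝ) * α) := by
  rcases lt_or_eq_of_le (Int.fract_nonneg ((d:ℝ) * α)) with h | h
  · exact h
  · exfalso
    have hirr : Irrational ((d:ℝ) * α) := hα.intCast_mul hd
    have hf : Int.fract ((d:ℝ)*α) = (d:ℝ)*α - ⌊(d:ℝ)*α⌋ := rfl
    exact hirr.ne_int ⌊(d:ℝ)*α⌋ (by linarith)

lemma fract_int_mul_inj {α : ℝ} (hα : Irrational α) {a b : ℤ}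
    (h : Int.fract ((a : ℝ) * α) = Int.fract ((b : ℝ) * α)) : a = b := by
  by_contra hne
  have h1 : (a : ℝ) * α - (b : ℝ) * α = ((⌊(a:ℝ)*α⌋ - ⌊(b:ℝ)*α⌋ : ℤ) : ℝ) := by
    have ha := show Int.fract ((a:ℝ)*α) = (a:ℝ)*α - ⌊(a:ℝ)*α⌋ from rfl
    have hb := show Int.fract ((b:ℝ)*α) = (b:ℝ)*α - ⌊(b:ℝ)*α⌋ from rfl
    push_cast; linarith [h, ha, hb]
  have h2 : ((a - b : ℤ) : ℝ) * α = ((⌊(a:ℝ)*α⌋ - ⌊(b:ℝ)*α⌋ : ℤ) : ℝ) := by push_cast; push_cast at h1; linarith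
  have hab : (a - b : ℤ) ≠ 0 := sub_ne_zero.mpr hne
  exact (hα.intCast_mul hab).ne_int _ h2


lemma cast_sub_mul (m' m : ℕ) (α : ℝ) :
    (m' : ℝ) * α - (m : ℝ) * α = (((m' : ℤ) - (m : ℤ) : ℤ) : ℝ) * α := by push_cast; ring

lemma fract_pt_sub_pos {α : ℝ} (hα : Irrational α) {m' m : ℕ} (hne : m' ≠ m) :
    0 < Int.fract ((m' : ℝ) * α - (m : ℝ) * α) := by
  rw [cast_sub_mul]
  exact fract_int_mul_pos hα (sub_ne_zero.mpr (by exact_mod_cast hne))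

lemma gapAt_le {α : ℝ} (hα : Irrational α) {N m : ℕ} (m' : ℕ) (h' : m' < N) (hne : m' ≠ m) :
    gapAt α N m ≤ Int.fract ((m' : ℝ) * α - (m : ℝ) * α) :=
  csInf_le ⟨0, fun _ hd => le_of_lt hd.1⟩ ⟨fract_pt_sub_pos hα hne, m', h', rfl⟩

lemma gapAt_mem {α : ℝ} (hα : Irrational α) {N : ℕ} (hN : 2 ≤ N) (m : ℕ) :
    0 < gapAt α N m ∧ ∃ m' : ℕ, m' < N ∧
      Int.fract ((m' : ℝ) * α - (m : ℝ) * α) = gapAt α N m := by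
  set S := {d : ℝ | 0 < d ∧ ∃ m' : ℕ, m' < N ∧ Int.fract ((m' : ℝ) * α - (m : ℝ) * α) = d} with hS
  have hfin : S.Finite := by
    apply Set.Finite.subset (((Set.finite_Iio N)).image
      (fun m' : ℕ => Int.fract ((m' : ℝ) * α - (m : ℝ) * α)))
    rintro d ⟨_, m', hm', rfl⟩
    exact ⟨m', hm', rfl⟩
  have hnon : S.Nonempty := by
    rcases eq_or_ne m 0 with rfl | hm
    · exact ⟨_, fract_pt_sub_pos hα (one_ne_zero), 1, by omega, rfl⟩
    · exact ⟨_, fract_pt_sub_pos hα (Ne.symm hm), 0, by omega, rfl⟩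
  have h := hnon.csInf_mem hfin
  have : gapAt α N m ∈ S := h
  exact ⟨this.1, this.2⟩


lemma fract_of_neg {t : ℝ} (h1 : -1 ≤ t) (h2 : t < 0) : Int.fract t = t + 1 := by
  have h3 : Int.fract (t + 1) = t + 1 := Int.fract_eq_self.2 ⟨by linarith, by linarith⟩
  have h := Int.fract_add_intCast t (1:ℤ)
  push_cast at h
  linarith

lemma fract_sub_eq_of_lt {a b : ℝ} (h : Int.fract b < Int.fract a) :
    Int.fract (a - b) = Int.fract a - Int.fract b := by
  rw [fract_sub_fract]
  exact Int.fract_eq_self.2 ⟨by linarith [Int.fract_nonneg b],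
    by linarith [Int.fract_lt_one a, Int.fract_nonneg b]⟩

lemma fract_sub_eq_of_gt {a b : ℝ} (h : Int.fract a < Int.fract b) :
    Int.fract (a - b) = Int.fract a - Int.fract b + 1 := by
  rw [fract_sub_fract]
  exact fract_of_neg (by linarith [Int.fract_nonneg a, Int.fract_lt_one b]) (by linarith)

section main
variable {α : ℝ} {N : ℕ} {u : ℕ → ℕ}

lemma u_zero (hN : 2 ≤ N) (hbij : Set.BijOn u (Set.Iio N) (Set.Iio N))
    (hmono : StrictMonoOn (fun j => Int.fract ((u j : ℝ) * α)) (Set.Iio N)) : u 0 = 0 := by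
  obtain ⟨j, hj, hj0⟩ := hbij.surjOn (show (0:ℕ) ∈ Set.Iio N by simp; omega)
  rcases Nat.eq_zero_or_pos j with rfl | hpos
  · exact hj0
  · exfalso
    have h1 : Int.fract ((u 0 : ℝ) * α) < Int.fract ((u j : ℝ) * α) :=
      hmono (show (0:ℕ) ∈ Set.Iio N by simp; omega) hj hpos
    rw [hj0] at h1
    simp at h1
    exact absurd h1 (not_lt.2 (Int.fract_nonneg _))

lemma gap_succ (hα : Irrational α) (hN : 2 ≤ N)
    (hbij : Set.BijOn u (Set.Iio N) (Set.Iio N))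
    (hmono : StrictMonoOn (fun j => Int.fract ((u j : ℝ) * α)) (Set.Iio N))
    {j : ℕ} (hj : j + 1 < N) :
    gapAt α N (u j) = Int.fract ((u (j+1) : ℝ) * α) - Int.fract ((u j : ℝ) * α) := by
  have hjN : j < N := by omega
  have hmono' : ∀ {a b : ℕ}, a < b → b < N →
      Int.fract ((u a : ℝ) * α) < Int.fract ((u b : ℝ) * α) := fun hab hb =>
    hmono (Set.mem_Iio.2 (by omega)) (Set.mem_Iio.2 hb) hab
  have he0 : Int.fract ((u j : ℝ) * α) < Int.fract ((u (j+1) : ℝ) * α) := hmono' (by omega) hj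
  have hfe : Int.fract ((u (j+1) : ℝ) * α - (u j : ℝ) * α)
      = Int.fract ((u (j+1) : ℝ) * α) - Int.fract ((u j : ℝ) * α) := fract_sub_eq_of_lt he0
  have hle : gapAt α N (u j) ≤ Int.fract ((u (j+1) : ℝ) * α) - Int.fract ((u j : ℝ) * α) := by
    rw [← hfe]
    exact gapAt_le hα (u (j+1)) (hbij.mapsTo (Set.mem_Iio.2 hj)) (fun h => by
      have := hbij.injOn (Set.mem_Iio.2 hj) (Set.mem_Iio.2 hjN) h; omega)
  obtain ⟨hpos, m'', hm'', heq⟩ := gapAt_mem hα hN (u j)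
  obtain ⟨j'', hj''N, hj''⟩ := hbij.surjOn (Set.mem_Iio.2 hm'')
  rw [← hj''] at heq
  have hj''N' : j'' < N := hj''N
  have hge : Int.fract ((u (j+1) : ℝ) * α) - Int.fract ((u j : ℝ) * α) ≤ gapAt α N (u j) := by
    rcases lt_trichotomy j'' j with h | h | h
    · have hlt : Int.fract ((u j'' : ℝ) * α) < Int.fract ((u j : ℝ) * α) := hmono' h hjN
      rw [fract_sub_eq_of_gt hlt] at heq
      have h1 : 0 ≤ Int.fract ((u j'' : ℝ) * α) := Int.fract_nonneg _
      have h2 : Int.fract ((u (j+1) : ℝ) * α) < 1 := Int.fract_lt_one _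
      linarith
    · exfalso
      rw [h] at heq
      simp at heq
      linarith
    · have hlt : Int.fract ((u j : ℝ) * α) < Int.fract ((u j'' : ℝ) * α) := hmono' h hj''N'
      rw [fract_sub_eq_of_lt hlt] at heq
      have : Int.fract ((u (j+1) : ℝ) * α) ≤ Int.fract ((u j'' : ℝ) * α) := by
        rcases eq_or_lt_of_le (show j + 1 ≤ j'' by omega) with rfl | hlt2
        · exact le_refl _
        · exact le_of_lt (hmono' hlt2 hj''N')
      linarith
  linarith

lemma gap_last (hα : Irrational α) (hN : 2 ≤ N)
    (hbij : Set.BijOn u (Set.Iio N) (Set.Iio N))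
    (hmono : StrictMonoOn (fun j => Int.fract ((u j : ℝ) * α)) (Set.Iio N)) :
    gapAt α N (u (N-1)) = 1 - Int.fract ((u (N-1) : ℝ) * α) := by
  have hu0 : u 0 = 0 := u_zero hN hbij hmono
  have hN1 : N - 1 < N := by omega
  have hmono' : ∀ {a b : ℕ}, a < b → b < N →
      Int.fract ((u a : ℝ) * α) < Int.fract ((u b : ℝ) * α) := fun hab hb =>
    hmono (Set.mem_Iio.2 (by omega)) (Set.mem_Iio.2 hb) hab
  have hsne : u (N-1) ≠ 0 := by
    intro h
    have := hbij.injOn (Set.mem_Iio.2 hN1) (Set.mem_Iio.2 (show 0 < N by omega)) (by rw [h, hu0])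
    omega
  have hxs : 0 < Int.fract ((u (N-1) : ℝ) * α) := by
    have hc : ((u (N-1) : ℝ)) * α = (((u (N-1) : ℕ) : ℤ) : ℝ) * α := by push_cast; ring
    rw [hc]
    exact fract_int_mul_pos hα (by exact_mod_cast hsne)
  have hx0 : Int.fract ((0 : ℕ) * (α : ℝ)) = 0 := by norm_num
  have hle : gapAt α N (u (N-1)) ≤ 1 - Int.fract ((u (N-1) : ℝ) * α) := by
    have hlt0 : Int.fract (((0:ℕ) : ℝ) * α) < Int.fract ((u (N-1) : ℝ) * α) := by
      rw [show (((0:ℕ):ℝ)) * α = (0:ℝ)*α by norm_num]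
      simpa using hxs
    have hval := fract_sub_eq_of_gt hlt0
    rw [show Int.fract (((0:ℕ):ℝ) * α) = 0 by norm_num] at hval
    calc gapAt α N (u (N-1)) ≤ Int.fract (((0:ℕ) : ℝ) * α - (u (N-1) : ℝ) * α) :=
          gapAt_le hα 0 (by omega) (Ne.symm hsne)
      _ = 1 - Int.fract ((u (N-1) : ℝ) * α) := by rw [hval]; ring
  obtain ⟨hpos, m'', hm'', heq⟩ := gapAt_mem hα hN (u (N-1))
  obtain ⟨j'', hj''N, hj''⟩ := hbij.surjOn (Set.mem_Iio.2 hm'')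
  rw [← hj''] at heq
  have hge : 1 - Int.fract ((u (N-1) : ℝ) * α) ≤ gapAt α N (u (N-1)) := by
    rcases lt_or_eq_of_le (show j'' ≤ N - 1 by have : j'' < N := hj''N; omega) with h | h
    · have hlt : Int.fract ((u j'' : ℝ) * α) < Int.fract ((u (N-1) : ℝ) * α) := hmono' h hN1
      rw [fract_sub_eq_of_gt hlt] at heq
      have h1 : 0 ≤ Int.fract ((u j'' : ℝ) * α) := Int.fract_nonneg _
      linarith
    · exfalso
      rw [h] at heq
      simp at heq
      linarith
  linarith

end main


section main
variable {α : ℝ} {N : ℕ} {u : ℕ → ℕ}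

open Finset in
lemma count_filter (hbij : Set.BijOn u (Set.Iio N) (Set.Iio N))
    (P : ℕ → Prop) [DecidablePred P] :
    ((Finset.range N).filter (fun j => P (u j))).card = ((Finset.range N).filter P).card := by
  apply Finset.card_bij (fun j _ => u j)
  · intro j hj
    simp only [Finset.mem_filter, Finset.mem_range] at *
    exact ⟨hbij.mapsTo (Set.mem_Iio.2 hj.1), hj.2⟩
  · intro j1 h1 j2 h2 h
    simp only [Finset.mem_filter, Finset.mem_range] at *
    exact hbij.injOn (Set.mem_Iio.2 h1.1) (Set.mem_Iio.2 h2.1) h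
  · intro m hm
    simp only [Finset.mem_filter, Finset.mem_range] at hm
    obtain ⟨j, hj, hjm⟩ := hbij.surjOn (Set.mem_Iio.2 hm.1)
    exact ⟨j, by simp only [Finset.mem_filter, Finset.mem_range]; exact ⟨hj, by rw [hjm]; exact hm.2⟩, hjm⟩

open Classical in
lemma main_structure (hα : Irrational α) (hN : 2 ≤ N)
    (hbij : Set.BijOn u (Set.Iio N) (Set.Iio N))
    (hmono : StrictMonoOn (fun j => Int.fract ((u j : ℝ) * α)) (Set.Iio N))
    (hrel : (gapSet α N).card = 2) :
    1 ≤ u 1 ∧ u 1 < N ∧ Nat.Coprime (u 1) N ∧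
    (∀ j, j < N → u j = (j * u 1) % N) ∧
    (∀ m, m < N → m + u 1 < N → gapAt α N m = Int.fract ((u 1 : ℝ) * α)) ∧
    (∀ m, m < N → N ≤ m + u 1 → gapAt α N m = 1 - Int.fract (((N - u 1 : ℕ) : ℝ) * α)) ∧
    Int.fract ((u 1 : ℝ) * α) ≠ 1 - Int.fract (((N - u 1 : ℕ) : ℝ) * α) := by
  have hu0 : u 0 = 0 := u_zero hN hbij hmono
  set r := u 1 with hrdef
  set s := u (N-1) with hsdef
  have hrN : r < N := hbij.mapsTo (Set.mem_Iio.2 (by omega))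
  have hsN : s < N := hbij.mapsTo (Set.mem_Iio.2 (by omega))
  have hinj : ∀ {i j : ℕ}, i < N → j < N → u i = u j → i = j := fun hi hj h =>
    hbij.injOn (Set.mem_Iio.2 hi) (Set.mem_Iio.2 hj) h
  have hr1 : 1 ≤ r := by
    by_contra h
    have h2 : (1:ℕ) = 0 := hinj (by omega) (by omega) (by rw [hu0]; omega)
    omega
  have hs1 : 1 ≤ s := by
    by_contra h
    have h2 : N - 1 = 0 := hinj (by omega) (by omega) (by rw [hu0]; omega)
    omega
  -- abbreviations
  have hxr_eq : ∀ (n : ℕ), ((n : ℝ)) * α = (((n : ℤ)) : ℝ) * α := fun n => by push_cast; ring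
  have hxpos : ∀ (n : ℕ), n ≠ 0 → 0 < Int.fract ((n : ℝ) * α) := by
    intro n hn
    rw [hxr_eq]
    exact fract_int_mul_pos hα (by exact_mod_cast hn)
  -- the two candidate gap values
  have hg0 : gapAt α N 0 = Int.fract ((r : ℝ) * α) := by
    have := gap_succ hα hN hbij hmono (j := 0) (by omega)
    rw [hu0] at this
    simpa using this
  have hgs : gapAt α N s = 1 - Int.fract ((s : ℝ) * α) := gap_last hα hN hbij hmono
  have hsum_ne : Int.fract ((r : ℝ) * α) ≠ 1 - Int.fract ((s : ℝ) * α) := by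
    intro h
    have h1 : Int.fract ((r : ℝ) * α + (s : ℝ) * α) = 0 := by
      rw [fract_add_fract, h]
      norm_num
    have h2 : (r : ℝ) * α + (s : ℝ) * α = (((r + s : ℤ)) : ℝ) * α := by push_cast; ring
    rw [h2] at h1
    exact absurd h1 (ne_of_gt (fract_int_mul_pos hα (by positivity)))
  -- every gap is one of the two values
  have hpair : ∀ m, m < N → gapAt α N m = Int.fract ((r : ℝ) * α) ∨
      gapAt α N m = 1 - Int.fract ((s : ℝ) * α) := by
    have h1 : ({Int.fract ((r : ℝ) * α), 1 - Int.fract ((s : ℝ) * α)} : Finset ℝ) ⊆ gapSet α N := by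
      intro d hd
      simp only [Finset.mem_insert, Finset.mem_singleton] at hd
      rcases hd with rfl | rfl
      · exact Finset.mem_image.2 ⟨0, Finset.mem_range.2 (by omega), hg0⟩
      · exact Finset.mem_image.2 ⟨s, Finset.mem_range.2 hsN, hgs⟩
    have h2 : ({Int.fract ((r : ℝ) * α), 1 - Int.fract ((s : ℝ) * α)} : Finset ℝ) = gapSet α N :=
      Finset.eq_of_subset_of_card_le h1 (by rw [hrel, Finset.card_pair hsum_ne])
    intro m hm
    have h3 : gapAt α N m ∈ gapSet α N := Finset.mem_image.2 ⟨m, Finset.mem_range.2 hm, rfl⟩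
    rw [← h2] at h3
    simpa using h3
  -- fract of step difference equals the gap
  have hd : ∀ j, j + 1 < N →
      Int.fract (((((u (j+1) : ℤ) - (u j : ℤ)) : ℤ) : ℝ) * α) = gapAt α N (u j) := by
    intro j hj
    have h1 : (((((u (j+1) : ℤ) - (u j : ℤ)) : ℤ) : ℝ)) * α = (u (j+1) : ℝ) * α - (u j : ℝ) * α := by
      push_cast; ring
    have he0 : Int.fract ((u j : ℝ) * α) < Int.fract ((u (j+1) : ℝ) * α) :=
      hmono (Set.mem_Iio.2 (by omega)) (Set.mem_Iio.2 hj) (by omega)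
    rw [h1, fract_sub_eq_of_lt he0, gap_succ hα hN hbij hmono hj]
  have hfs : Int.fract (((-(s:ℤ) : ℤ) : ℝ) * α) = 1 - Int.fract ((s : ℝ) * α) := by
    have hne0 : Int.fract ((s : ℝ) * α) ≠ 0 := ne_of_gt (hxpos s (by omega))
    push_cast
    rw [neg_mul, Int.fract_neg hne0]
  -- dichotomy for each step
  have hstep : ∀ j, j + 1 < N → (u (j+1) = u j + r) ∨ (u j = u (j+1) + s) := by
    intro j hj
    rcases hpair (u j) (hbij.mapsTo (Set.mem_Iio.2 (by omega))) with h | h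
    · left
      have h2 : Int.fract (((((u (j+1) : ℤ) - (u j : ℤ)) : ℤ) : ℝ) * α)
          = Int.fract (((r : ℤ) : ℝ) * α) := by rw [hd j hj, h, hxr_eq]
      have h3 := fract_int_mul_inj hα h2
      omega
    · right
      have h2 : Int.fract (((((u (j+1) : ℤ) - (u j : ℤ)) : ℤ) : ℝ) * α)
          = Int.fract (((-(s:ℤ) : ℤ) : ℝ) * α) := by rw [hd j hj, h, hfs]
      have h3 := fract_int_mul_inj hα h2
      omega
  -- telescoping sum
  have htel : ∑ j ∈ Finset.range (N-1), (((u (j+1)) : ℤ) - ((u j) : ℤ)) = (s : ℤ) := by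
    rw [Finset.sum_range_sub (fun j => ((u j) : ℤ)), hu0]
    simp [hsdef]
  set T := (Finset.range (N-1)).filter (fun j => u (j+1) = u j + r) with hT
  set T' := (Finset.range (N-1)).filter (fun j => ¬ u (j+1) = u j + r) with hT'
  set a := T.card with ha
  set b := T'.card with hbdef
  have hab : a + b = N - 1 := by
    rw [ha, hbdef, hT, hT']
    exact Finset.card_filter_add_card_filter_not (s := Finset.range (N-1))
      (p := fun j => u (j+1) = u j + r) |>.trans (Finset.card_range (N-1))
  have hsplit := Finset.sum_filter_add_sum_filter_not (Finset.range (N-1))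
      (fun j => u (j+1) = u j + r) (fun j => ((u (j+1)):ℤ) - (u j))
  have h1 : ∑ j ∈ T, (((u (j+1)):ℤ) - (u j)) = (a:ℤ) * r := by
    rw [Finset.sum_congr rfl (g := fun _ => ((r:ℕ):ℤ)) (fun j hj => by
      simp only [hT, Finset.mem_filter] at hj
      show ((u (j+1)):ℤ) - (u j) = ((r:ℕ):ℤ)
      omega)]
    simp [ha, mul_comm]
  have h2 : ∑ j ∈ T', (((u (j+1)):ℤ) - (u j)) = -((b:ℤ) * s) := by
    rw [Finset.sum_congr rfl (g := fun _ => -((s:ℕ):ℤ)) (fun j hj => by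
      simp only [hT', Finset.mem_filter, Finset.mem_range] at hj
      show ((u (j+1)):ℤ) - (u j) = -((s:ℕ):ℤ)
      rcases hstep j (by omega) with h | h
      · exact absurd h hj.2
      · omega)]
    simp [hbdef, mul_comm]
  have hkey : (a:ℤ) * r - (b:ℤ) * s = s := by
    rw [← hT, ← hT', h1, h2, htel] at hsplit
    linarith
  -- deduce s = N - r by case analysis on which gap is smaller
  have hsr : s = N - r := by
    rcases lt_or_gt_of_ne hsum_ne with hAB | hAB
    · -- small gap is fract(rα)
      have claimA : ∀ j, j + 1 < N → u j + r < N → u (j+1) = u j + r := by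
        intro j hj hjr
        have hval : Int.fract (((u j + r : ℕ) : ℝ) * α - (u j : ℝ) * α)
            = Int.fract ((r:ℝ) * α) := by
          rw [show ((u j + r : ℕ) : ℝ) * α - (u j : ℝ) * α = (r : ℝ) * α by push_cast; ring]
        have hle2 : gapAt α N (u j) ≤ Int.fract ((r:ℝ) * α) := by
          rw [← hval]
          exact gapAt_le hα (u j + r) hjr (by omega)
        rcases hpair (u j) (hbij.mapsTo (Set.mem_Iio.2 (by omega))) with h | h
        · have h2 : Int.fract (((((u (j+1) : ℤ) - (u j : ℤ)) : ℤ) : ℝ) * α)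
              = Int.fract (((r : ℤ) : ℝ) * α) := by rw [hd j hj, h, hxr_eq]
          have := fract_int_mul_inj hα h2; omega
        · exfalso; rw [h] at hle2; linarith
      have claimA2 : N ≤ s + r := by
        by_contra h
        push_neg at h
        have hval : Int.fract (((s + r : ℕ) : ℝ) * α - (s : ℝ) * α)
            = Int.fract ((r:ℝ) * α) := by
          rw [show ((s + r : ℕ) : ℝ) * α - (s : ℝ) * α = (r : ℝ) * α by push_cast; ring]
        have hle2 : gapAt α N s ≤ Int.fract ((r:ℝ) * α) := by
          rw [← hval]
          exact gapAt_le hα (s + r) h (by omega)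
        rw [hgs] at hle2
        linarith
      have hTchar : T = (Finset.range (N-1)).filter (fun j => u j + r < N) := by
        ext j
        simp only [hT, Finset.mem_filter, Finset.mem_range]
        constructor
        · rintro ⟨hj, hju⟩
          have h5 : u (j+1) < N := hbij.mapsTo (Set.mem_Iio.2 (by omega))
          exact ⟨hj, by omega⟩
        · rintro ⟨hj, hjr⟩
          exact ⟨hj, claimA j (by omega) hjr⟩
      have hNs : ¬ (u (N-1) + r < N) := by omega
      have hrange : Finset.range N = insert (N-1) (Finset.range (N-1)) := by
        conv_lhs => rw [show N = N - 1 + 1 by omega, Finset.range_add_one]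
      have hsplitN : (Finset.range N).filter (fun j => u j + r < N)
          = (Finset.range (N-1)).filter (fun j => u j + r < N) := by
        rw [hrange, Finset.filter_insert, if_neg hNs]
      have hcount : ((Finset.range N).filter (fun j => u j + r < N)).card = N - r := by
        rw [count_filter hbij (fun m => m + r < N)]
        rw [show (Finset.range N).filter (fun m => m + r < N) = Finset.range (N - r) by
          ext m; simp only [Finset.mem_filter, Finset.mem_range]; omega]
        exact Finset.card_range (N - r)
      have haval : a = N - r := by rw [ha, hTchar, ← hsplitN, hcount]
      have haz : (a:ℤ) = (N:ℤ) - r := by omega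
      have hbz : (b:ℤ) = (r:ℤ) - 1 := by omega
      have hz : (r:ℤ) * ((N:ℤ) - r) = (r:ℤ) * s := by
        linear_combination hkey - (r:ℤ) * haz + (s:ℤ) * hbz
      have := mul_left_cancel₀ (show (r:ℤ) ≠ 0 by omega) hz
      omega
    · -- small gap is 1 - fract(sα)
      have claimB : ∀ j, j + 1 < N → s ≤ u j → u j = u (j+1) + s := by
        intro j hj hsle
        have hujN : u j < N := hbij.mapsTo (Set.mem_Iio.2 (by omega))
        have hval : Int.fract (((u j - s : ℕ) : ℝ) * α - (u j : ℝ) * α)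
            = 1 - Int.fract ((s:ℝ) * α) := by
          rw [show ((u j - s : ℕ) : ℝ) * α - (u j : ℝ) * α = ((-(s:ℤ) : ℤ) : ℝ) * α by
            rw [Nat.cast_sub hsle]; push_cast; ring]
          exact hfs
        have hle2 : gapAt α N (u j) ≤ 1 - Int.fract ((s:ℝ) * α) := by
          rw [← hval]
          exact gapAt_le hα (u j - s) (by omega) (by omega)
        rcases hpair (u j) (hbij.mapsTo (Set.mem_Iio.2 (by omega))) with h | h
        · exfalso; rw [h] at hle2; linarith
        · have h2 : Int.fract (((((u (j+1) : ℤ) - (u j : ℤ)) : ℤ) : ℝ) * α)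
              = Int.fract (((-(s:ℤ) : ℤ) : ℝ) * α) := by rw [hd j hj, h, hfs]
          have := fract_int_mul_inj hα h2; omega
      have hTchar' : T' = (Finset.range (N-1)).filter (fun j => s ≤ u j) := by
        ext j
        simp only [hT', Finset.mem_filter, Finset.mem_range]
        constructor
        · rintro ⟨hj, hju⟩
          rcases hstep j (by omega) with h | h
          · exact absurd h hju
          · exact ⟨hj, by omega⟩
        · rintro ⟨hj, hjs⟩
          have := claimB j (by omega) hjs
          exact ⟨hj, by omega⟩
      have hrange : Finset.range N = insert (N-1) (Finset.range (N-1)) := by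
        conv_lhs => rw [show N = N - 1 + 1 by omega, Finset.range_add_one]
      have hsplitN : (Finset.range N).filter (fun j => s ≤ u j)
          = insert (N-1) ((Finset.range (N-1)).filter (fun j => s ≤ u j)) := by
        rw [hrange, Finset.filter_insert, if_pos (le_refl s)]
      have hcount : ((Finset.range N).filter (fun j => s ≤ u j)).card = N - s := by
        rw [count_filter hbij (fun m => s ≤ m)]
        rw [show (Finset.range N).filter (fun m => s ≤ m) = Finset.Ico s N by
          ext m; simp only [Finset.mem_filter, Finset.mem_range, Finset.mem_Ico]; omega]
        exact Nat.card_Ico s N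
      have hbval : b = N - s - 1 := by
        have h6 : ((Finset.range N).filter (fun j => s ≤ u j)).card
            = ((Finset.range (N-1)).filter (fun j => s ≤ u j)).card + 1 := by
          rw [hsplitN, Finset.card_insert_of_notMem (by simp)]
        rw [hcount] at h6
        have h7 : b = ((Finset.range (N-1)).filter (fun j => s ≤ u j)).card := by
          rw [hbdef, hTchar']
        omega
      have haz : (a:ℤ) = (s:ℤ) := by omega
      have hbz : (b:ℤ) = (N:ℤ) - s - 1 := by omega
      have hz : (s:ℤ) * r = (s:ℤ) * ((N:ℤ) - s) := by
        linear_combination hkey - (r:ℤ) * haz + (s:ℤ) * hbz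
      have := mul_left_cancel₀ (show (s:ℤ) ≠ 0 by omega) hz
      omega
  -- the permutation is j ↦ j*r mod N
  have hur : ∀ j, j < N → u j = (j * r) % N := by
    intro j
    induction j with
    | zero => intro _; simpa using hu0
    | succ j ih =>
      intro hj
      have hjN : j < N := by omega
      have hv := ih hjN
      have hvlt : (j * r) % N < N := Nat.mod_lt _ (by omega)
      have hmul : (j+1) * r = j * r + r := by ring
      rcases hstep j hj with h | h
      · have hu1N : u (j+1) < N := hbij.mapsTo (Set.mem_Iio.2 hj)
        have hlt2 : (j*r) % N + r < N := by omega
        have hgoal : ((j+1)*r) % N = (j*r) % N + r := by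
          rw [hmul, Nat.add_mod, Nat.mod_eq_of_lt hrN, Nat.mod_eq_of_lt hlt2]
        omega
      · have hsle : s ≤ u j := by omega
        have h1 : N ≤ (j*r) % N + r := by omega
        have h2 : (j*r) % N + r - N < N := by omega
        have hgoal : ((j+1)*r) % N = (j*r) % N + r - N := by
          rw [hmul, Nat.add_mod, Nat.mod_eq_of_lt hrN, Nat.mod_eq_sub_mod h1,
            Nat.mod_eq_of_lt h2]
        omega
  -- coprimality
  have hcop : Nat.Coprime r N := by
    obtain ⟨j, hj, hj1⟩ := hbij.surjOn (Set.mem_Iio.2 (show 1 < N by omega))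
    have h1 : (j * r) % N = 1 := by rw [← hur j hj, hj1]
    have hg1 : Nat.gcd r N ∣ j * r := Dvd.dvd.mul_left (Nat.gcd_dvd_left r N) j
    have hg2 : Nat.gcd r N ∣ N * (j*r / N) := Dvd.dvd.mul_right (Nat.gcd_dvd_right r N) _
    have hg3 : Nat.gcd r N ∣ (j*r) % N := by
      have h4 := Nat.mod_add_div (j*r) N
      have h5 : (j*r) % N = j*r - N*(j*r/N) := by omega
      rw [h5]; exact Nat.dvd_sub hg1 hg2
    rw [h1] at hg3
    exact Nat.dvd_one.mp hg3
  -- gap formulas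
  have hgap1 : ∀ m, m < N → m + r < N → gapAt α N m = Int.fract ((r:ℝ) * α) := by
    intro m hm hmr
    obtain ⟨j, hjset, rfl⟩ := hbij.surjOn (Set.mem_Iio.2 hm)
    have hjN : j < N := hjset
    rcases Nat.lt_or_ge (j+1) N with hj | hj
    · rcases hstep j hj with h | h
      · have h2 := hd j hj
        have h3 : ((u (j+1) : ℤ)) - ((u j : ℤ)) = ((r:ℕ) : ℤ) := by omega
        rw [h3] at h2
        rw [← h2, ← hxr_eq]
      · exfalso; omega
    · exfalso
      have hj2 : j = N - 1 := by omega
      have : u j = s := by rw [hj2]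
      omega
  have hgap2 : ∀ m, m < N → N ≤ m + r → gapAt α N m = 1 - Int.fract ((s:ℝ) * α) := by
    intro m hm hmr
    obtain ⟨j, hjset, rfl⟩ := hbij.surjOn (Set.mem_Iio.2 hm)
    have hjN : j < N := hjset
    rcases Nat.lt_or_ge (j+1) N with hj | hj
    · rcases hstep j hj with h | h
      · exfalso
        have hu1N : u (j+1) < N := hbij.mapsTo (Set.mem_Iio.2 hj)
        omega
      · have h2 := hd j hj
        have h3 : ((u (j+1) : ℤ)) - ((u j : ℤ)) = -((s:ℕ) : ℤ) := by omega
        rw [h3] at h2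
        rw [← h2, hfs]
    · have hj2 : j = N - 1 := by omega
      have h4 : u j = s := by rw [hj2]
      rw [h4, hgs]
  have hsNr : ((N - r : ℕ) : ℝ) * α = (s : ℝ) * α := by rw [← hsr]
  refine ⟨hr1, hrN, hcop, hur, hgap1, ?_, ?_⟩
  · intro m hm hmr
    rw [hsNr]
    exact hgap2 m hm hmr
  · rw [hsNr]
    exact hsum_ne

end main


theorem symmetry_at_relabeling_time (α : ℝ) (hα : Irrational α) (N : ℕ) (hN : 2 ≤ N)
    (u : ℕ → ℕ) (hbij : Set.BijOn u (Set.Iio N) (Set.Iio N))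
    (hmono : StrictMonoOn (fun j => Int.fract ((u j : ℝ) * α)) (Set.Iio N))
    (hrel : (gapSet α N).card = 2)
    (J : ℕ) (hJ : J < N) (hJval : u J = N - 1) :
    gapAt α N (uc N u ((J : ℤ) - 1)) ≠ gapAt α N (uc N u (J : ℤ)) ∧
    ∀ k : ℕ, 1 ≤ k → k ≤ N - 2 →
      gapAt α N (uc N u ((J : ℤ) - 1 - (k : ℤ))) =
        gapAt α N (uc N u ((J : ℤ) + (k : ℤ))) := by
  obtain ⟨hr1, hrN, hcop, hur, hgap1, hgap2, hne⟩ := main_structure hα hN hbij hmono hrel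
  set r := u 1 with hrdef
  have hNz : (N : ℤ) ≠ 0 := by exact_mod_cast (by omega : N ≠ 0)
  have hNpos : (0:ℤ) < (N:ℤ) := by exact_mod_cast (by omega : 0 < N)
  -- uc formula
  have hucf : ∀ t : ℤ, ((uc N u t : ℕ) : ℤ) = (t * r) % (N:ℤ) ∧ uc N u t < N := by
    intro t
    have h1 : 0 ≤ t % (N:ℤ) := Int.emod_nonneg t hNz
    have h2 : t % (N:ℤ) < N := Int.emod_lt_of_pos t hNpos
    set j := (t % (N:ℤ)).toNat with hjdef
    have hj : (j:ℤ) = t % (N:ℤ) := Int.toNat_of_nonneg h1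
    have hjN : j < N := by omega
    have hu : uc N u t = (j * r) % N := hur j hjN
    refine ⟨?_, by rw [hu]; exact Nat.mod_lt _ (by omega)⟩
    rw [hu]
    push_cast
    rw [hj]
    conv_lhs => rw [Int.mul_emod]
    conv_rhs => rw [Int.mul_emod]
    rw [Int.emod_emod_of_dvd t (dvd_refl (N:ℤ))]
  -- J * r ≡ N - 1
  have hJr : (J * r) % N = N - 1 := by rw [← hur J hJ, hJval]
  have hJrz : ((J:ℤ) * r) % N = (N:ℤ) - 1 := by
    have h := congrArg (fun n : ℕ => (n : ℤ)) hJr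
    push_cast at h
    rw [h]
    omega
  obtain ⟨q1, hq1⟩ : ∃ q1 : ℤ, (J:ℤ) * r = ((N:ℤ) - 1) + N * q1 := by
    refine ⟨((J:ℤ)*r) / N, ?_⟩
    have := Int.emod_add_mul_ediv ((J:ℤ)*r) N
    omega
  constructor
  · -- part 1
    -- uc (J) = N - 1
    obtain ⟨hA, hAN⟩ := hucf (J:ℤ)
    obtain ⟨hB, hBN⟩ := hucf ((J:ℤ) - 1)
    have hAval : uc N u (J:ℤ) = N - 1 := by
      rw [hJrz] at hA; omega
    have hBval : uc N u ((J:ℤ) - 1) = N - 1 - r := by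
      have h3 : ((J:ℤ) - 1) * r = ((N:ℤ) - 1 - r) + N * q1 := by
        linear_combination hq1
      rw [h3, Int.add_mul_emod_self_left, Int.emod_eq_of_lt (by omega) (by omega)] at hB
      omega
    rw [hAval, hBval]
    rw [hgap1 (N - 1 - r) (by omega) (by omega), hgap2 (N - 1) (by omega) (by omega)]
    exact hne
  · -- part 2
    intro k hk1 hk2
    obtain ⟨hv1, hv1N⟩ := hucf ((J:ℤ) - 1 - k)
    obtain ⟨hv2, hv2N⟩ := hucf ((J:ℤ) + k)
    set w : ℤ := ((k:ℤ) + 1) * r % N with hwdef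
    have hw0 : 0 ≤ w := Int.emod_nonneg _ hNz
    have hwN : w < N := Int.emod_lt_of_pos _ hNpos
    obtain ⟨q2, hq2⟩ : ∃ q2 : ℤ, ((k:ℤ) + 1) * r = w + N * q2 := by
      refine ⟨(((k:ℤ)+1)*r) / N, ?_⟩
      have := Int.emod_add_mul_ediv (((k:ℤ)+1)*r) N
      omega
    -- w ≠ 0
    have hwne0 : w ≠ 0 := by
      intro h
      have hmul : (((k+1) * r : ℕ) : ℤ) = ((k:ℤ)+1) * (r:ℤ) := by push_cast; ring
      have h5 : (((k+1) * r : ℕ) : ℤ) = (N:ℤ) * q2 := by rw [hmul]; omega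
      have h6 : (N:ℤ) ∣ (((k+1) * r : ℕ) : ℤ) := ⟨q2, h5⟩
      have hdvd : (N:ℕ) ∣ (k+1) * r := by exact_mod_cast h6
      have h7 := (Nat.Coprime.dvd_of_dvd_mul_right (hcop.symm) hdvd)
      have := Nat.le_of_dvd (by omega) h7
      omega
    -- w ≠ r
    have hwner : w ≠ (r:ℤ) := by
      intro h
      have hmul : ((k:ℤ)+1) * r = (k:ℤ) * r + r := by ring
      have hmul2 : ((k * r : ℕ) : ℤ) = (k:ℤ) * (r:ℤ) := by push_cast; ring
      have h5 : ((k * r : ℕ) : ℤ) = (N:ℤ) * q2 := by rw [hmul2, show (k:ℤ) * (r:ℤ) = ((k:ℤ)+1) * r - r by ring]; omega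
      have h6 : (N:ℤ) ∣ ((k * r : ℕ) : ℤ) := ⟨q2, h5⟩
      have hdvd : (N:ℕ) ∣ k * r := by exact_mod_cast h6
      have h7 := (Nat.Coprime.dvd_of_dvd_mul_right (hcop.symm) hdvd)
      have := Nat.le_of_dvd (by omega) h7
      omega
    -- value of v1
    have hv1val : ((uc N u ((J:ℤ) - 1 - k) : ℕ) : ℤ) = (N:ℤ) - 1 - w := by
      have h3 : ((J:ℤ) - 1 - k) * r = ((N:ℤ) - 1 - w) + N * (q1 - q2) := by
        linear_combination hq1 - hq2
      rw [h3, Int.add_mul_emod_self_left, Int.emod_eq_of_lt (by omega) (by omega)] at hv1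
      exact hv1
    rcases lt_or_gt_of_ne hwner with hcase | hcase
    · -- w < r : both gaps are the long one
      have hv2val : ((uc N u ((J:ℤ) + k) : ℕ) : ℤ) = (N:ℤ) - 1 - ((r:ℤ) - w) := by
        have h3 : ((J:ℤ) + k) * r = ((N:ℤ) - 1 - ((r:ℤ) - w)) + N * (q1 + q2) := by
          linear_combination hq1 + hq2
        rw [h3, Int.add_mul_emod_self_left, Int.emod_eq_of_lt (by omega) (by omega)] at hv2
        exact hv2
      rw [hgap2 _ hv1N (by omega), hgap2 _ hv2N (by omega)]
    · -- w > r : both gaps are the short one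
      have hv2val : ((uc N u ((J:ℤ) + k) : ℕ) : ℤ) = w - r - 1 := by
        have h3 : ((J:ℤ) + k) * r = (w - (r:ℤ) - 1) + N * (q1 + q2 + 1) := by
          linear_combination hq1 + hq2
        rw [h3, Int.add_mul_emod_self_left, Int.emod_eq_of_lt (by omega) (by omega)] at hv2
        exact hv2
      rw [hgap1 _ hv1N (by omega), hgap1 _ hv2N (by omega)]
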